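/- As x → ∞, the MRC tail satisfies 1 - F_MRC(x) = (N_t/ρ)^{N_t-1}/(N_r-1)! · e^{-x} x^{N_r-N_t} (1 + O(1/x)), where F_MRC(x) = 1 - e^{-x}(1+(ρ/N_t)x)^{1-N_t} Σ_{k=0}^{N_r-1} Σ_{p=0}^{k} α_{p,k} x^k (1+(ρ/N_t)x)^{-p} with α_{p,k} = C(N_t+p-2,p)(ρ/N_t)^p/(k-p)!. -/

import Mathlib

open Real Filter

private lemma lemA (c : ℝ) (hc : 0 < c) (m : ℕ) :
    Tendsto (fun x : ℝ => x ^ (m : ℝ) / (1 + c * x) ^ m) atTop (nhds (c⁻¹ ^ m)) := by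
  have hbase : Tendsto (fun x : ℝ => x / (1 + c * x)) atTop (nhds c⁻¹) := by
    have h2 : Tendsto (fun x : ℝ => x⁻¹ + c) atTop (nhds c) := by
      have := tendsto_inv_atTop_zero.add (tendsto_const_nhds (α := ℝ) (x := c))
      simpa using this
    have h1 : Tendsto (fun x : ℝ => (x⁻¹ + c)⁻¹) atTop (nhds c⁻¹) :=
      h2.inv₀ hc.ne'
    refine h1.congr' ?_
    filter_upwards [eventually_gt_atTop (0 : ℝ)] with x hx
    have hden : (0 : ℝ) < 1 + c * x := by nlinarith
    field_simp
  have := hbase.pow m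
  refine this.congr fun x => ?_
  rw [div_pow, Real.rpow_natCast]

private lemma lemB (c : ℝ) (hc : 0 < c) (r : ℝ) (m : ℕ) (h : r < m) :
    Tendsto (fun x : ℝ => x ^ r / (1 + c * x) ^ m) atTop (nhds 0) := by
  have h0 : Tendsto (fun x : ℝ => x ^ (-((m : ℝ) - r))) atTop (nhds 0) :=
    tendsto_rpow_neg_atTop (by linarith)
  have hprod := h0.mul (lemA c hc m)
  rw [zero_mul] at hprod
  refine hprod.congr' ?_
  filter_upwards [eventually_gt_atTop (0 : ℝ)] with x hx
  rw [mul_div_assoc', ← Real.rpow_add hx]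
  ring_nf

theorem stmt15 (Nr Nt : ℕ) (hNr : 1 ≤ Nr) (hNt : 2 ≤ Nt) (ρ : ℝ) (hρ : 0 < ρ)
    (α : ℕ → ℕ → ℝ)
    (hα : ∀ p k, α p k = ((Nt + p - 2).choose p : ℝ) * (ρ / Nt) ^ p /
      (Nat.factorial (k - p)))
    (F : ℝ → ℝ)
    (hF : ∀ x : ℝ, F x = 1 - Real.exp (-x) / (1 + ρ / Nt * x) ^ (Nt - 1) *
      ∑ k ∈ Finset.range Nr, ∑ p ∈ Finset.range (k + 1),
        α p k * x ^ k / (1 + ρ / Nt * x) ^ p) :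
    Tendsto (fun x : ℝ => Real.exp x * x ^ ((Nt : ℝ) - Nr) * (1 - F x)) atTop
      (nhds (((Nt : ℝ) / ρ) ^ (Nt - 1) / (Nat.factorial (Nr - 1)))) := by
  have hNt0 : (0 : ℝ) < Nt := by
    have : 0 < Nt := by omega
    exact_mod_cast this
  set c : ℝ := ρ / Nt with hc_def
  have hc : 0 < c := div_pos hρ hNt0
  -- limit of each term
  have hmain : Tendsto (fun x : ℝ => ∑ k ∈ Finset.range Nr, ∑ p ∈ Finset.range (k + 1),
      α p k * (x ^ ((Nt : ℝ) - Nr + k) / (1 + c * x) ^ (Nt - 1 + p))) atTop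
      (nhds (∑ k ∈ Finset.range Nr, ∑ p ∈ Finset.range (k + 1),
        (if k = Nr - 1 then (if p = 0 then α p k * c⁻¹ ^ (Nt - 1) else 0) else 0))) := by
    apply tendsto_finset_sum
    intro k hk
    apply tendsto_finset_sum
    intro p hp
    rw [Finset.mem_range] at hk hp
    by_cases hcond : k = Nr - 1 ∧ p = 0
    · obtain ⟨hk1, hp0⟩ := hcond
      subst hk1; subst hp0
      simp only [if_pos rfl]
      have he : (Nt : ℝ) - Nr + (Nr - 1 : ℕ) = ((Nt - 1 : ℕ) : ℝ) := by
        have h1 : ((Nr - 1 : ℕ) : ℝ) = (Nr : ℝ) - 1 := by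
          push_cast [Nat.cast_sub hNr]; ring
        have h2 : ((Nt - 1 : ℕ) : ℝ) = (Nt : ℝ) - 1 := by
          push_cast [Nat.cast_sub (by omega : 1 ≤ Nt)]; ring
        rw [h1, h2]; ring
      have h3 := (lemA c hc (Nt - 1)).const_mul (α 0 (Nr - 1))
      refine h3.congr fun x => ?_
      rw [he]
      norm_num
    · have hneg : ¬(k = Nr - 1 ∧ p = 0) := hcond
      have hlt : (Nt : ℝ) - Nr + k < ((Nt - 1 + p : ℕ) : ℝ) := by
        have hn : k + 1 < Nr + p := by omega
        have h2 : ((Nt - 1 + p : ℕ) : ℝ) = (Nt : ℝ) - 1 + p := by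
          push_cast [Nat.cast_sub (by omega : 1 ≤ Nt)]; ring
        rw [h2]
        have : (k : ℝ) + 1 < (Nr : ℝ) + p := by exact_mod_cast hn
        linarith
      have hlim := (lemB c hc ((Nt : ℝ) - Nr + k) (Nt - 1 + p) hlt).const_mul (α p k)
      rw [mul_zero] at hlim
      have hvalue : (if k = Nr - 1 then (if p = 0 then α p k * c⁻¹ ^ (Nt - 1) else 0) else 0) = 0 := by
        by_cases hk1 : k = Nr - 1
        · have hp1 : p ≠ 0 := fun h => hneg ⟨hk1, h⟩
          simp [hk1, hp1]
        · simp [hk1]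
      rw [hvalue]
      exact hlim
  -- value of the limit sum
  have hsum : (∑ k ∈ Finset.range Nr, ∑ p ∈ Finset.range (k + 1),
      (if k = Nr - 1 then (if p = 0 then α p k * c⁻¹ ^ (Nt - 1) else 0) else 0))
      = ((Nt : ℝ) / ρ) ^ (Nt - 1) / (Nat.factorial (Nr - 1)) := by
    rw [Finset.sum_eq_single (Nr - 1)]
    · have hstep : ∀ p ∈ Finset.range (Nr - 1 + 1),
          (if Nr - 1 = Nr - 1 then (if p = 0 then α p (Nr - 1) * c⁻¹ ^ (Nt - 1) else 0) else 0)
          = (if p = 0 then α p (Nr - 1) * c⁻¹ ^ (Nt - 1) else 0) := by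
        intro p _; simp
      rw [Finset.sum_congr rfl hstep, Finset.sum_ite_eq' (Finset.range (Nr - 1 + 1)) 0
        (fun p => α p (Nr - 1) * c⁻¹ ^ (Nt - 1))]
      simp only [Finset.mem_range, Nat.zero_lt_succ, if_pos]
      rw [hα]
      have hcinv : c⁻¹ = (Nt : ℝ) / ρ := by
        rw [hc_def, inv_div]
      rw [hcinv]
      simp [Nat.choose_zero_right]
      ring
    · intro b _ hb
      simp [hb]
    · intro h
      exact absurd (Finset.mem_range.mpr (by omega)) h
  -- eventual equality
  rw [← hsum]
  refine hmain.congr' ?_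
  filter_upwards [eventually_gt_atTop (0 : ℝ)] with x hx
  have hden : (0 : ℝ) < 1 + c * x := by nlinarith
  rw [hF]
  have h1 : (1 : ℝ) - (1 - Real.exp (-x) / (1 + ρ / Nt * x) ^ (Nt - 1) *
      ∑ k ∈ Finset.range Nr, ∑ p ∈ Finset.range (k + 1),
        α p k * x ^ k / (1 + ρ / Nt * x) ^ p)
      = Real.exp (-x) / (1 + c * x) ^ (Nt - 1) *
      ∑ k ∈ Finset.range Nr, ∑ p ∈ Finset.range (k + 1),
        α p k * x ^ k / (1 + c * x) ^ p := by
    rw [← hc_def]; ring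
  rw [h1, Finset.mul_sum, Finset.mul_sum]
  refine Finset.sum_congr rfl fun k hk => ?_
  rw [Finset.mul_sum, Finset.mul_sum]
  refine Finset.sum_congr rfl fun p hp => ?_
  rw [Real.rpow_add hx, Real.rpow_natCast, pow_add, Real.exp_neg]
  have hexp : Real.exp x ≠ 0 := (Real.exp_pos x).ne'
  field_simp
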